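/- Let n ≥ 2, m ≥ 1 be integers and c₁ > 0. There exist a constant C > 0 and a positive integer N ≥ 3 such that: for every integer k with |k| ≥ N, every t ∈ [−π/2, 3π/2), and every λ ∈ ℂ with |λ − (2πk + t)^n| ≤ c₁ |k|^{n−1−1/(2m)}, one has Σ_{p ∈ ℤ, p ∉ A(k,n,t)} |p|^{n−2} / |λ − (2πp + t)^n| ≤ C ln|k| / |k|, where for n = 2 the term with p = 0 is interpreted with |p|^{n−2} = 1. -/

import Mathlib

open Real

/-- The set `T(k) = [−π/2, 3π/2) \ ((−1/ln|k|, 1/ln|k|) ∪ (π − 1/ln|k|, π + 1/ln|k|))`. -/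
def Tset (k : ℤ) : Set ℝ :=
  Set.Ico (-(π/2)) (3*π/2) \
    (Set.Ioo (-(Real.log |(k:ℝ)|)⁻¹) (Real.log |(k:ℝ)|)⁻¹ ∪
      Set.Ioo (π - (Real.log |(k:ℝ)|)⁻¹) (π + (Real.log |(k:ℝ)|)⁻¹))

open Classical in
/-- The set `A(k,n,t) ⊆ ℤ`: equal to `{k}` if `n` is odd, or if `n` is even and
`t ∈ T(k)`; equal to `{k, −k}` if `n` is even and `|t| < 1/ln|k|`; and equal to
`{k, −(k+1)}` if `n` is even and `|t − π| < 1/ln|k|`. -/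
noncomputable def Aset (n : ℕ) (k : ℤ) (t : ℝ) : Set ℤ :=
  if Odd n then {k}
  else if |t| < (Real.log |(k:ℝ)|)⁻¹ then {k, -k}
  else if |t - π| < (Real.log |(k:ℝ)|)⁻¹ then {k, -(k+1)}
  else {k}


lemma aux_pow_sub_pow (M : ℕ) {a b : ℝ} (hb : 0 ≤ b) (hba : b ≤ a) :
    (a - b) * ((a + b) / 2) ^ M ≤ a ^ (M + 1) - b ^ (M + 1) := by
  have ha : 0 ≤ a := hb.trans hba
  have h1 : ((a + b) / 2) ^ M ≤ a ^ M := pow_le_pow_left₀ (by linarith) (by linarith) M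
  have h2 : b ^ (M + 1) ≤ b * a ^ M := by
    rw [pow_succ']
    exact mul_le_mul_of_nonneg_left (pow_le_pow_left₀ hb hba M) hb
  have h3 : (a - b) * ((a + b) / 2) ^ M ≤ (a - b) * a ^ M :=
    mul_le_mul_of_nonneg_left h1 (by linarith)
  have h4 : (a - b) * a ^ M = a ^ (M + 1) - b * a ^ M := by ring
  linarith

lemma aux_even_core (M : ℕ) {x y : ℝ} (h : |y| ≤ |x|) :
    |(|x| - |y|)| * ((|x| + |y|) / 2) ^ M ≤ |(|x|) ^ (M + 1) - (|y|) ^ (M + 1)| := by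
  rw [abs_of_nonneg (sub_nonneg.2 h),
    abs_of_nonneg (sub_nonneg.2 (pow_le_pow_left₀ (abs_nonneg y) h _))]
  exact aux_pow_sub_pow M (abs_nonneg y) h

lemma aux_even (M : ℕ) (x y : ℝ) :
    |(|x| - |y|)| * ((|x| + |y|) / 2) ^ M ≤ |(|x|) ^ (M + 1) - (|y|) ^ (M + 1)| := by
  rcases le_total |y| |x| with h | h
  · exact aux_even_core M h
  · have := aux_even_core M h
    rw [abs_sub_comm (|y|) (|x|), abs_sub_comm ((|y|) ^ (M + 1)), add_comm (|y|)] at this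
    exact this

lemma aux_odd_core (M : ℕ) (hM : Odd (M + 1)) {x y : ℝ} (h : y ≤ x) :
    |x - y| * ((|x| + |y|) / 2) ^ M ≤ 2 * |x ^ (M + 1) - y ^ (M + 1)| := by
  have hpow : y ^ (M + 1) ≤ x ^ (M + 1) := (hM.strictMono_pow (R := ℝ)).monotone h
  rw [abs_of_nonneg (sub_nonneg.2 h), abs_of_nonneg (sub_nonneg.2 hpow)]
  rcases le_total 0 y with hy | hy
  · have hx : (0:ℝ) ≤ x := hy.trans h
    rw [abs_of_nonneg hx, abs_of_nonneg hy]
    have := aux_pow_sub_pow M hy h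
    linarith
  · rcases le_total x 0 with hx | hx
    · have hthis := aux_pow_sub_pow M (b := -x) (a := -y) (by linarith) (by linarith)
      rw [abs_of_nonpos hx, abs_of_nonpos hy]
      rw [hM.neg_pow, hM.neg_pow] at hthis
      have e2 : ((-y) + -x) / 2 = (-x + -y) / 2 := by ring
      rw [e2] at hthis
      have e : x - y = -y - -x := by ring
      rw [e]
      linarith
    · have hc : (0:ℝ) ≤ -y := by linarith
      rw [abs_of_nonneg hx, abs_of_nonpos hy]
      have hxyn : x ^ (M + 1) - y ^ (M + 1) = x ^ (M + 1) + (-y) ^ (M + 1) := by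
        rw [hM.neg_pow]; ring
      have key : (x + -y) * ((x + -y) / 2) ^ M ≤ 2 * (x ^ (M + 1) + (-y) ^ (M + 1)) := by
        have h1 : ((x + -y) / 2) ≤ max x (-y) := by
          rcases le_total x (-y) with hh | hh
          · calc (x + -y) / 2 ≤ (-y + -y) / 2 := by linarith
              _ = -y := by ring
              _ ≤ max x (-y) := le_max_right _ _
          · calc (x + -y) / 2 ≤ (x + x) / 2 := by linarith
              _ = x := by ring
              _ ≤ max x (-y) := le_max_left _ _
        have h0 : (0:ℝ) ≤ (x + -y) / 2 := by positivity
        have h2 : ((x + -y) / 2) ^ (M + 1) ≤ (max x (-y)) ^ (M + 1) := pow_le_pow_left₀ h0 h1 _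
        have h3 : (max x (-y)) ^ (M + 1) ≤ x ^ (M + 1) + (-y) ^ (M + 1) := by
          rcases le_total x (-y) with hh | hh
          · rw [max_eq_right hh]; nlinarith [pow_nonneg hx (M + 1)]
          · rw [max_eq_left hh]; nlinarith [pow_nonneg hc (M + 1)]
        have e : (x + -y) * ((x + -y) / 2) ^ M = 2 * ((x + -y) / 2) ^ (M + 1) := by
          rw [pow_succ]; ring
        rw [e]; linarith
      rw [hxyn]
      have e : x - y = x + -y := by ring
      rw [e]; exact key

lemma aux_odd (M : ℕ) (hM : Odd (M + 1)) (x y : ℝ) :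
    |x - y| * ((|x| + |y|) / 2) ^ M ≤ 2 * |x ^ (M + 1) - y ^ (M + 1)| := by
  rcases le_total y x with h | h
  · exact aux_odd_core M hM h
  · have := aux_odd_core M hM h
    rw [abs_sub_comm y x, abs_sub_comm (y ^ (M + 1)), add_comm (|y|)] at this
    exact this

lemma aux_min_abs (x y : ℝ) : min |x - y| |x + y| ≤ |(|x| - |y|)| := by
  rcases le_total 0 x with hx | hx <;> rcases le_total 0 y with hy | hy
  · rw [abs_of_nonneg hx, abs_of_nonneg hy]; exact min_le_left _ _
  · rw [abs_of_nonneg hx, abs_of_nonpos hy, sub_neg_eq_add]; exact min_le_right _ _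
  · rw [abs_of_nonpos hx, abs_of_nonneg hy, show -x - y = -(x + y) by ring, abs_neg]
    exact min_le_right _ _
  · rw [abs_of_nonpos hx, abs_of_nonpos hy, show -x - -y = -(x - y) by ring, abs_neg]
    exact min_le_left _ _


lemma aux_fiber (F : Finset ℤ) (c : ℤ) (h : ℕ → ℝ) (hh : ∀ i, 0 ≤ h i) (T : Finset ℕ)
    (hT : ∀ p ∈ F, (p - c).natAbs ∈ T) :
    ∑ p ∈ F, h ((p - c).natAbs) ≤ 2 * ∑ i ∈ T, h i := by
  classical
  have key : ∀ G : Finset ℤ, G ⊆ F →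
      (∀ p ∈ G, ∀ q ∈ G, (p - c).natAbs = (q - c).natAbs → p = q) →
      ∑ p ∈ G, h ((p - c).natAbs) ≤ ∑ i ∈ T, h i := by
    intro G hGF hinj
    rw [← Finset.sum_image (f := h) hinj]
    apply Finset.sum_le_sum_of_subset_of_nonneg
    · intro i hi
      rw [Finset.mem_image] at hi
      obtain ⟨p, hp, rfl⟩ := hi
      exact hT p (hGF hp)
    · intro i _ _; exact hh i
  have h1 := key (F.filter (fun p => c ≤ p)) (Finset.filter_subset _ _) (by
    intro p hp q hq hpq
    rw [Finset.mem_filter] at hp hq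
    omega)
  have h2 := key (F.filter (fun p => ¬ c ≤ p)) (Finset.filter_subset _ _) (by
    intro p hp q hq hpq
    rw [Finset.mem_filter] at hp hq
    omega)
  have := Finset.sum_filter_add_sum_filter_not F (fun p => c ≤ p) (fun p => h ((p - c).natAbs))
  linarith

lemma aux_tail : ∀ (S : Finset ℕ) (M : ℕ), 1 ≤ M → (∀ i ∈ S, M < i) →
    ∑ i ∈ S, ((i : ℝ) ^ 2)⁻¹ ≤ (M : ℝ)⁻¹ := by
  intro S
  induction S using Finset.strongInduction with
  | _ S ih =>
    intro M hM hS
    rcases S.eq_empty_or_nonempty with rfl | hne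
    · simp
    · set i₀ := S.min' hne with hi₀def
      have hi₀S : i₀ ∈ S := S.min'_mem hne
      have hi₀ : M < i₀ := hS _ hi₀S
      have h1 : ∑ i ∈ S.erase i₀, ((i : ℝ) ^ 2)⁻¹ ≤ (i₀ : ℝ)⁻¹ := by
        apply ih _ (Finset.erase_ssubset hi₀S) i₀ (by omega)
        intro i hi
        exact lt_of_le_of_ne (S.min'_le i (Finset.mem_of_mem_erase hi))
          (Ne.symm (Finset.ne_of_mem_erase hi))
      have h2 : ∑ i ∈ S, ((i : ℝ) ^ 2)⁻¹
          = ((i₀ : ℝ) ^ 2)⁻¹ + ∑ i ∈ S.erase i₀, ((i : ℝ) ^ 2)⁻¹ :=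
        (Finset.add_sum_erase _ _ hi₀S).symm
      have hi₀R : (M : ℝ) + 1 ≤ (i₀ : ℝ) := by exact_mod_cast hi₀
      have hM0 : (0:ℝ) < M := by exact_mod_cast hM
      have hi₀0 : (0:ℝ) < i₀ := by linarith
      have harith : ((i₀ : ℝ) ^ 2)⁻¹ + (i₀ : ℝ)⁻¹ ≤ (M : ℝ)⁻¹ := by
        rw [show ((i₀ : ℝ) ^ 2)⁻¹ + (i₀ : ℝ)⁻¹ = (1 + i₀) / i₀ ^ 2 by field_simp,
          inv_eq_one_div]
        rw [div_le_div_iff₀ (by positivity) hM0]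
        nlinarith
      linarith

lemma aux_base_summable : Summable (fun j : ℤ => ((max |(j : ℝ)| 1) ^ 2)⁻¹) := by
  have h1 : Summable (fun j : ℤ => ((j : ℝ) ^ 2)⁻¹ + (if j = 0 then (1:ℝ) else 0)) := by
    apply Summable.add
    · simpa [one_div] using Real.summable_one_div_int_pow.mpr one_lt_two
    · apply summable_of_ne_finset_zero (s := ({0} : Finset ℤ))
      intro b hb
      simp only [Finset.mem_singleton] at hb
      simp [hb]
  apply h1.congr
  intro j
  by_cases hj : j = 0
  · subst hj; norm_num
  · have hj1 : (1:ℝ) ≤ |(j : ℝ)| := by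
      rw [← Int.cast_abs]
      exact_mod_cast Int.one_le_abs hj
    rw [if_neg hj, add_zero, max_eq_left hj1, ← sq_abs]


-- window harmonic bound
lemma aux_window (M : ℕ) :
    ∑ i ∈ Finset.range (M + 1), (max (i : ℝ) 1)⁻¹ ≤ 2 + Real.log M := by
  have e : ∑ i ∈ Finset.range (M + 1), (max (i : ℝ) 1)⁻¹
      = (∑ i ∈ Finset.range M, ((i : ℝ) + 1)⁻¹) + 1 := by
    rw [Finset.sum_range_succ' (fun i => (max (i : ℝ) 1)⁻¹) M]
    congr 1
    · apply Finset.sum_congr rfl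
      intro i _
      have h1 : (1:ℝ) ≤ ((i + 1 : ℕ) : ℝ) := by push_cast; linarith [Nat.cast_nonneg (α := ℝ) i]
      rw [max_eq_left h1]
      push_cast
      ring_nf
    · norm_num
  rw [e]
  have h2 : (∑ i ∈ Finset.range M, ((i : ℝ) + 1)⁻¹) = (harmonic M : ℝ) := by
    rw [harmonic]
    push_cast
    rfl
  rw [h2]
  have := harmonic_le_one_add_log M
  linarith

lemma aux_crux' (k c : ℤ) (hk : 3 ≤ |k|) (hc : |c| ≤ |k|) :
    Summable (fun p : ℤ => ((max |(p : ℝ) - (c : ℝ)| 1) * max |(p : ℝ)| |(k : ℝ)|)⁻¹) ∧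
      ∑' p : ℤ, ((max |(p : ℝ) - (c : ℝ)| 1) * max |(p : ℝ)| |(k : ℝ)|)⁻¹
        ≤ 20 * Real.log |(k : ℝ)| / |(k : ℝ)| := by
  classical
  have hK3 : (3:ℝ) ≤ |(k:ℝ)| := by
    rw [← Int.cast_abs]; exact_mod_cast hk
  have hK0 : (0:ℝ) < |(k:ℝ)| := by linarith
  have hcK : |(c:ℝ)| ≤ |(k:ℝ)| := by
    rw [← Int.cast_abs, ← Int.cast_abs]; exact_mod_cast hc
  have hL1 : (1:ℝ) ≤ Real.log |(k:ℝ)| := by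
    have h3 : Real.exp 1 ≤ 3 := by
      have := Real.exp_one_lt_d9; linarith
    calc (1:ℝ) = Real.log (Real.exp 1) := (Real.log_exp 1).symm
      _ ≤ Real.log |(k:ℝ)| := Real.log_le_log (Real.exp_pos 1) (le_trans h3 hK3)
  -- natAbs cast identity
  have hna : ∀ p : ℤ, (((p - c).natAbs : ℕ) : ℝ) = |(p:ℝ) - (c:ℝ)| := by
    intro p
    rw [Nat.cast_natAbs, Int.cast_abs]
    push_cast
    rfl
  -- summability
  have hpt : ∀ p : ℤ, ((max |(p:ℝ) - (c:ℝ)| 1) * max |(p:ℝ)| |(k:ℝ)|)⁻¹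
      ≤ ((max |(p:ℝ) - (c:ℝ)| 1) ^ 2)⁻¹ + ((max |(p:ℝ)| 1) ^ 2)⁻¹ := by
    intro p
    have ha1 : (1:ℝ) ≤ max |(p:ℝ) - (c:ℝ)| 1 := le_max_right _ _
    have hb1 : (1:ℝ) ≤ max |(p:ℝ)| 1 := le_max_right _ _
    set a := max |(p:ℝ) - (c:ℝ)| 1
    set b' := max |(p:ℝ)| 1
    have hbb : b' ≤ max |(p:ℝ)| |(k:ℝ)| := max_le_max le_rfl (by linarith)
    have h1 : (a * max |(p:ℝ)| |(k:ℝ)|)⁻¹ ≤ (a * b')⁻¹ := by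
      apply inv_anti₀ (by nlinarith)
      nlinarith
    rcases le_total a b' with hab | hab
    · have h2 : (a * b')⁻¹ ≤ (a ^ 2)⁻¹ := by
        apply inv_anti₀ (by nlinarith)
        nlinarith
      have h3 : (0:ℝ) ≤ (b' ^ 2)⁻¹ := by positivity
      linarith
    · have h2 : (a * b')⁻¹ ≤ (b' ^ 2)⁻¹ := by
        apply inv_anti₀ (by nlinarith)
        nlinarith
      have h3 : (0:ℝ) ≤ (a ^ 2)⁻¹ := by positivity
      linarith
  have hs1 : Summable (fun p : ℤ => ((max |(p:ℝ) - (c:ℝ)| 1) ^ 2)⁻¹) := by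
    have h := (Equiv.summable_iff (Equiv.subRight c)
      (f := fun j : ℤ => ((max |(j : ℝ)| 1) ^ 2)⁻¹)).mpr aux_base_summable
    apply h.congr
    intro p
    simp only [Function.comp_apply, Equiv.subRight_apply]
    push_cast
    rfl
  have hsumm : Summable (fun p : ℤ =>
      ((max |(p:ℝ) - (c:ℝ)| 1) * max |(p:ℝ)| |(k:ℝ)|)⁻¹) :=
    Summable.of_nonneg_of_le (fun p => by positivity) hpt (hs1.add aux_base_summable)
  refine ⟨hsumm, ?_⟩
  apply Summable.tsum_le_of_sum_le hsumm
  intro S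
  rw [← Finset.sum_filter_add_sum_filter_not S (fun p => |p - c| ≤ 4 * |k|)]
  -- window part
  have hwin : ∑ p ∈ S.filter (fun p => |p - c| ≤ 4 * |k|),
      ((max |(p:ℝ) - (c:ℝ)| 1) * max |(p:ℝ)| |(k:ℝ)|)⁻¹
      ≤ |(k:ℝ)|⁻¹ * (2 * (2 + Real.log ((4 * |k|).toNat))) := by
    have hb1 : ∀ p ∈ S.filter (fun p => |p - c| ≤ 4 * |k|),
        ((max |(p:ℝ) - (c:ℝ)| 1) * max |(p:ℝ)| |(k:ℝ)|)⁻¹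
        ≤ |(k:ℝ)|⁻¹ * (max (((p - c).natAbs : ℕ) : ℝ) 1)⁻¹ := by
      intro p _
      rw [hna p]
      have ha1 : (1:ℝ) ≤ max |(p:ℝ) - (c:ℝ)| 1 := le_max_right _ _
      have hKb : |(k:ℝ)| ≤ max |(p:ℝ)| |(k:ℝ)| := le_max_right _ _
      rw [← mul_inv]
      apply inv_anti₀ (by nlinarith)
      rw [mul_comm (|(k:ℝ)|)]
      apply mul_le_mul_of_nonneg_left hKb (by linarith)
    calc ∑ p ∈ S.filter (fun p => |p - c| ≤ 4 * |k|),
        ((max |(p:ℝ) - (c:ℝ)| 1) * max |(p:ℝ)| |(k:ℝ)|)⁻¹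
        ≤ ∑ p ∈ S.filter (fun p => |p - c| ≤ 4 * |k|),
          |(k:ℝ)|⁻¹ * (max (((p - c).natAbs : ℕ) : ℝ) 1)⁻¹ := Finset.sum_le_sum hb1
      _ = |(k:ℝ)|⁻¹ * ∑ p ∈ S.filter (fun p => |p - c| ≤ 4 * |k|),
          (max (((p - c).natAbs : ℕ) : ℝ) 1)⁻¹ := by rw [Finset.mul_sum]
      _ ≤ |(k:ℝ)|⁻¹ * (2 * ∑ i ∈ Finset.range ((4 * |k|).toNat + 1), (max (i : ℝ) 1)⁻¹) := by
          apply mul_le_mul_of_nonneg_left _ (by positivity)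
          apply aux_fiber _ c (fun i => (max (i : ℝ) 1)⁻¹) (fun i => by positivity)
          intro p hp
          rw [Finset.mem_filter] at hp
          rw [Finset.mem_range]
          have e1 : |p - c| = ((p - c).natAbs : ℤ) := Int.abs_eq_natAbs _
          have e2 : |k| = (k.natAbs : ℤ) := Int.abs_eq_natAbs _
          omega
      _ ≤ |(k:ℝ)|⁻¹ * (2 * (2 + Real.log ((4 * |k|).toNat))) := by
          apply mul_le_mul_of_nonneg_left _ (by positivity)
          have := aux_window ((4 * |k|).toNat)
          linarith
  -- tail part
  have htail : ∑ p ∈ S.filter (fun p => ¬ |p - c| ≤ 4 * |k|),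
      ((max |(p:ℝ) - (c:ℝ)| 1) * max |(p:ℝ)| |(k:ℝ)|)⁻¹
      ≤ 4 * (((4 * |k|).toNat : ℝ))⁻¹ := by
    set S₂ := S.filter (fun p => ¬ |p - c| ≤ 4 * |k|) with hS₂
    have hmem : ∀ p ∈ S₂, 4 * |k| < |p - c| := by
      intro p hp
      rw [hS₂, Finset.mem_filter] at hp
      omega
    have hb2 : ∀ p ∈ S₂, ((max |(p:ℝ) - (c:ℝ)| 1) * max |(p:ℝ)| |(k:ℝ)|)⁻¹
        ≤ 2 * ((((p - c).natAbs : ℕ) : ℝ) ^ 2)⁻¹ := by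
      intro p hp
      have hpc : 4 * |k| < |p - c| := hmem p hp
      have hpcR : 4 * |(k:ℝ)| < |(p:ℝ) - (c:ℝ)| := by
        have h1 : ((4 * |k| : ℤ) : ℝ) < ((|p - c| : ℤ) : ℝ) := by exact_mod_cast hpc
        push_cast [Int.cast_abs] at h1
        convert h1 using 2 <;> push_cast <;> ring
      have ha : max |(p:ℝ) - (c:ℝ)| 1 = |(p:ℝ) - (c:ℝ)| :=
        max_eq_left (by linarith)
      have hp1 : |(p:ℝ) - (c:ℝ)| - |(k:ℝ)| ≤ |(p:ℝ)| := by
        have := abs_add_le ((p:ℝ)) (-(c:ℝ))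
        rw [← sub_eq_add_neg, abs_neg] at this
        linarith
      have hbig : (3/4) * |(p:ℝ) - (c:ℝ)| ≤ max |(p:ℝ)| |(k:ℝ)| := by
        have := le_max_left |(p:ℝ)| |(k:ℝ)|
        linarith
      rw [hna p, ha]
      have h2 : (3/4) * |(p:ℝ) - (c:ℝ)| ^ 2
          ≤ |(p:ℝ) - (c:ℝ)| * max |(p:ℝ)| |(k:ℝ)| := by nlinarith
      have h3 : (|(p:ℝ) - (c:ℝ)| * max |(p:ℝ)| |(k:ℝ)|)⁻¹
          ≤ ((3/4) * |(p:ℝ) - (c:ℝ)| ^ 2)⁻¹ := by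
        apply inv_anti₀ (by nlinarith) h2
      have h4 : ((3/4) * |(p:ℝ) - (c:ℝ)| ^ 2)⁻¹ = (4/3) * (|(p:ℝ) - (c:ℝ)| ^ 2)⁻¹ := by
        rw [mul_inv]
        norm_num
      have h5 : (0:ℝ) ≤ (|(p:ℝ) - (c:ℝ)| ^ 2)⁻¹ := by positivity
      linarith
    calc ∑ p ∈ S₂, ((max |(p:ℝ) - (c:ℝ)| 1) * max |(p:ℝ)| |(k:ℝ)|)⁻¹
        ≤ ∑ p ∈ S₂, 2 * ((((p - c).natAbs : ℕ) : ℝ) ^ 2)⁻¹ := Finset.sum_le_sum hb2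
      _ = 2 * ∑ p ∈ S₂, ((((p - c).natAbs : ℕ) : ℝ) ^ 2)⁻¹ := by rw [Finset.mul_sum]
      _ ≤ 2 * (2 * ∑ i ∈ S₂.image (fun p => (p - c).natAbs), ((i : ℝ) ^ 2)⁻¹) := by
          apply mul_le_mul_of_nonneg_left _ (by norm_num)
          apply aux_fiber _ c (fun i => ((i : ℝ) ^ 2)⁻¹) (fun i => by positivity)
          intro p hp
          exact Finset.mem_image_of_mem _ hp
      _ ≤ 2 * (2 * (((4 * |k|).toNat : ℝ))⁻¹) := by
          apply mul_le_mul_of_nonneg_left _ (by norm_num)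
          apply mul_le_mul_of_nonneg_left _ (by norm_num)
          apply aux_tail _ ((4 * |k|).toNat) (by omega)
          intro i hi
          rw [Finset.mem_image] at hi
          obtain ⟨p, hp, rfl⟩ := hi
          have := hmem p hp
          have e1 : |p - c| = ((p - c).natAbs : ℤ) := Int.abs_eq_natAbs _
          have e2 : |k| = (k.natAbs : ℤ) := Int.abs_eq_natAbs _
          omega
      _ = 4 * (((4 * |k|).toNat : ℝ))⁻¹ := by ring
  -- numerics
  have hMK : (((4 * |k|).toNat : ℝ)) = 4 * |(k:ℝ)| := by
    have h0 : (0:ℤ) ≤ 4 * |k| := by positivity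
    rw [← Int.cast_natCast (R := ℝ), Int.toNat_of_nonneg h0]
    push_cast [Int.cast_abs]
    ring
  have hlog4 : Real.log ((4:ℝ) * |(k:ℝ)|) = Real.log 4 + Real.log |(k:ℝ)| :=
    Real.log_mul (by norm_num) (by linarith)
  have hlog4' : Real.log (4:ℝ) ≤ 3 := by
    have := Real.log_le_sub_one_of_pos (x := (4:ℝ)) (by norm_num)
    linarith
  rw [hMK] at hwin htail
  rw [hlog4] at hwin
  have hfin : |(k:ℝ)|⁻¹ * (2 * (2 + (Real.log 4 + Real.log |(k:ℝ)|)))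
      + 4 * ((4:ℝ) * |(k:ℝ)|)⁻¹ ≤ 20 * Real.log |(k:ℝ)| / |(k:ℝ)| := by
    rw [div_eq_mul_inv, mul_inv]
    have hKinv : (0:ℝ) ≤ |(k:ℝ)|⁻¹ := by positivity
    have key : 2 * (2 + (Real.log 4 + Real.log |(k:ℝ)|)) + 4 * (4:ℝ)⁻¹
        ≤ 20 * Real.log |(k:ℝ)| := by linarith
    nlinarith [key, hKinv]
  linarith



set_option maxHeartbeats 2000000 in
/-- Let `n ≥ 2, m ≥ 1` be integers and `c₁ > 0`. There exist a constant
`C > 0` and a positive integer `N ≥ 3` such that: for every integer `k` with `|k| ≥ N`,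
every `t ∈ [−π/2, 3π/2)`, and every `λ ∈ ℂ` with `|λ − (2πk + t)^n| ≤ c₁ |k|^{n−1−1/(2m)}`,
one has `Σ_{p ∈ ℤ, p ∉ A(k,n,t)} |p|^{n−2} / |λ − (2πp + t)^n| ≤ C ln|k| / |k|`
(for `n = 2` the term with `p = 0` has `|p|^{n−2} = 1`, as the natural-number power
`|p|^0 = 1` in Lean). -/
theorem stmt_6 (n m : ℕ) (hn : 2 ≤ n) (hm : 1 ≤ m) (c₁ : ℝ) (hc₁ : 0 < c₁) :
    ∃ C : ℝ, 0 < C ∧ ∃ N : ℕ, 3 ≤ N ∧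
      ∀ k : ℤ, (N : ℤ) ≤ |k| →
        ∀ t ∈ Set.Ico (-(π/2)) (3*π/2),
          ∀ lam : ℂ,
            norm (lam - ((2*π*(k:ℝ) + t : ℝ) : ℂ)^n)
              ≤ c₁ * |(k:ℝ)| ^ ((n:ℝ) - 1 - 1/(2*(m:ℝ))) →
            Summable (fun p : {p : ℤ // p ∉ Aset n k t} =>
              |(p.1:ℝ)|^(n-2) / norm (lam - ((2*π*(p.1:ℝ) + t : ℝ) : ℂ)^n)) ∧
            (∑' p : {p : ℤ // p ∉ Aset n k t},
                |(p.1:ℝ)|^(n-2) / norm (lam - ((2*π*(p.1:ℝ) + t : ℝ) : ℂ)^n))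
              ≤ C * Real.log |(k:ℝ)| / |(k:ℝ)| := by
  classical
  refine ⟨200, by norm_num, 3 + Nat.ceil ((16 * c₁ * (m:ℝ) + 1) ^ (4 * m)), by omega, ?_⟩
  intro k hk t ht lam hlam
  obtain ⟨ht1, ht2⟩ := ht
  have hπ : (3:ℝ) < π := Real.pi_gt_three
  have hk3 : (3:ℤ) ≤ |k| := by
    refine le_trans ?_ hk
    exact_mod_cast (by omega : 3 ≤ 3 + Nat.ceil ((16 * c₁ * (m:ℝ) + 1) ^ (4 * m)))
  have hK3 : (3:ℝ) ≤ |(k:ℝ)| := by rw [← Int.cast_abs]; exact_mod_cast hk3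
  have hK0 : (0:ℝ) < |(k:ℝ)| := by linarith
  have hL1 : (1:ℝ) ≤ Real.log |(k:ℝ)| := by
    have h3 : Real.exp 1 ≤ 3 := by have := Real.exp_one_lt_d9; linarith
    calc (1:ℝ) = Real.log (Real.exp 1) := (Real.log_exp 1).symm
      _ ≤ Real.log |(k:ℝ)| := Real.log_le_log (Real.exp_pos 1) (le_trans h3 hK3)
  have hL0 : (0:ℝ) < Real.log |(k:ℝ)| := by linarith
  have htabs : |t| ≤ 3 * π / 2 := abs_le.mpr ⟨by linarith, by linarith⟩
  have hm0 : (0:ℝ) < (m:ℝ) := by exact_mod_cast hm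
  -- choice of N gives the key smallness condition
  have hNK : ((16 * c₁ * (m:ℝ) + 1) ^ (4 * m) : ℝ) ≤ |(k:ℝ)| := by
    have h1 : ((3 + Nat.ceil ((16 * c₁ * (m:ℝ) + 1) ^ (4 * m)) : ℕ) : ℝ) ≤ |(k:ℝ)| := by
      rw [← Int.cast_abs]; exact_mod_cast hk
    have h2 := Nat.le_ceil ((16 * c₁ * (m:ℝ) + 1) ^ (4 * m))
    push_cast at h1
    linarith
  have hB0 : (0:ℝ) < 16 * c₁ * (m:ℝ) + 1 := by positivity
  have hu0 : (0:ℝ) < |(k:ℝ)| ^ ((4 * (m:ℝ))⁻¹) := Real.rpow_pos_of_pos hK0 _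
  have h4m : ((4 * m : ℕ) : ℝ) = 4 * (m:ℝ) := by push_cast; ring
  have hu_ge : 16 * c₁ * (m:ℝ) + 1 ≤ |(k:ℝ)| ^ ((4 * (m:ℝ))⁻¹) := by
    have h3 : (((16 * c₁ * (m:ℝ) + 1) ^ (4*m) : ℝ)) ^ ((4 * (m:ℝ))⁻¹)
        ≤ |(k:ℝ)| ^ ((4 * (m:ℝ))⁻¹) :=
      Real.rpow_le_rpow (by positivity) hNK (by positivity)
    rwa [← Real.rpow_natCast (16 * c₁ * (m:ℝ) + 1) (4*m), ← Real.rpow_mul hB0.le,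
      h4m, mul_inv_cancel₀ (by positivity), Real.rpow_one] at h3
  have hlogu : Real.log |(k:ℝ)| = 4 * (m:ℝ) * Real.log (|(k:ℝ)| ^ ((4 * (m:ℝ))⁻¹)) := by
    rw [Real.log_rpow hK0]
    field_simp
  have hloguu : Real.log (|(k:ℝ)| ^ ((4 * (m:ℝ))⁻¹)) ≤ |(k:ℝ)| ^ ((4 * (m:ℝ))⁻¹) := by
    have := Real.log_le_sub_one_of_pos hu0; linarith
  have huu : |(k:ℝ)| ^ ((4 * (m:ℝ))⁻¹) * |(k:ℝ)| ^ ((4 * (m:ℝ))⁻¹)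
      = |(k:ℝ)| ^ ((2 * (m:ℝ))⁻¹) := by
    rw [← Real.rpow_add hK0]
    congr 1
    field_simp
    ring
  have hN4 : 4 * c₁ * Real.log |(k:ℝ)| ≤ |(k:ℝ)| ^ ((2 * (m:ℝ))⁻¹) := by
    rw [← huu, hlogu]
    have hlogu0 : 0 ≤ Real.log (|(k:ℝ)| ^ ((4 * (m:ℝ))⁻¹)) := by
      have e : Real.log (|(k:ℝ)| ^ ((4 * (m:ℝ))⁻¹)) = (4 * (m:ℝ))⁻¹ * Real.log |(k:ℝ)| :=
        Real.log_rpow hK0 _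
      rw [e]; positivity
    nlinarith [hu_ge, hu0, hloguu, mul_le_mul_of_nonneg_left hloguu
      (by positivity : (0:ℝ) ≤ 16 * c₁ * (m:ℝ))]
  have hsplit : |(k:ℝ)| ^ ((n:ℝ) - 1 - 1/(2*(m:ℝ)))
      = |(k:ℝ)| ^ (n-1) * (|(k:ℝ)| ^ ((2*(m:ℝ))⁻¹))⁻¹ := by
    rw [← Real.rpow_natCast |(k:ℝ)| (n-1), ← Real.rpow_neg hK0.le, ← Real.rpow_add hK0]
    congr 1
    push_cast [Nat.cast_sub (by omega : 1 ≤ n)]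
    rw [one_div]
    ring
  have hc₁K : c₁ * |(k:ℝ)| ^ ((n:ℝ) - 1 - 1/(2*(m:ℝ)))
      ≤ |(k:ℝ)| ^ (n-1) / (4 * Real.log |(k:ℝ)|) := by
    rw [hsplit]
    have h1 : (|(k:ℝ)| ^ ((2*(m:ℝ))⁻¹))⁻¹ ≤ (4 * c₁ * Real.log |(k:ℝ)|)⁻¹ :=
      inv_anti₀ (by positivity) hN4
    calc c₁ * (|(k:ℝ)| ^ (n-1) * (|(k:ℝ)| ^ ((2*(m:ℝ))⁻¹))⁻¹)
        ≤ c₁ * (|(k:ℝ)| ^ (n-1) * (4 * c₁ * Real.log |(k:ℝ)|)⁻¹) := by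
          apply mul_le_mul_of_nonneg_left _ hc₁.le
          exact mul_le_mul_of_nonneg_left h1 (by positivity)
      _ = |(k:ℝ)| ^ (n-1) / (4 * Real.log |(k:ℝ)|) := by
          have e : c₁ * (4 * c₁ * Real.log |(k:ℝ)|)⁻¹ = (4 * Real.log |(k:ℝ)|)⁻¹ := by
            rw [show (4:ℝ) * c₁ * Real.log |(k:ℝ)| = c₁ * (4 * Real.log |(k:ℝ)|) by ring,
              mul_inv, ← mul_assoc, mul_inv_cancel₀ hc₁.ne', one_mul]
          rw [div_eq_mul_inv, ← e]
          ring
  have hkA : (k : ℤ) ∈ Aset n k t := by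
    rw [Aset]
    split_ifs <;> simp
  have hn1 : n - 1 + 1 = n := by omega
  have hn2 : n - 2 + 1 = n - 1 := by omega
  -- the main pointwise estimate
  have key : ∀ p : ℤ, p ∉ Aset n k t →
      |(p:ℝ)| ^ (n-2) / norm (lam - ((2*π*(p:ℝ) + t : ℝ) : ℂ) ^ n)
      ≤ 4 * ((max |(p:ℝ) - (k:ℝ)| 1) * max |(p:ℝ)| |(k:ℝ)|)⁻¹
        + 4 * ((max |(p:ℝ) + (k:ℝ)| 1) * max |(p:ℝ)| |(k:ℝ)|)⁻¹
        + (if p = -k ∨ p = -(k+1) then 4 * Real.log |(k:ℝ)| / |(k:ℝ)| else 0) := by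
    intro p hp
    have hpk : p ≠ k := fun h => hp (by rw [h]; exact hkA)
    set X : ℝ := 2*π*(p:ℝ) + t with hX
    set Y : ℝ := 2*π*(k:ℝ) + t with hY
    clear_value X Y
    have hy1 : π * |(k:ℝ)| ≤ |Y| := by
      have h1 := abs_add_le Y (-t)
      have e : Y + -t = 2*π*(k:ℝ) := by rw [hY]; ring
      rw [e, abs_neg, abs_mul, abs_of_pos (by positivity : (0:ℝ) < 2*π)] at h1
      nlinarith [mul_nonneg (by linarith : (0:ℝ) ≤ π) (by linarith : (0:ℝ) ≤ |(k:ℝ)| - 3/2)]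
    have havg : max (max |(p:ℝ)| 1) |(k:ℝ)| ≤ (|X| + |Y|) / 2 := by
      rcases le_or_gt 2 |(p:ℝ)| with hp2 | hp2
      · have hx1 : π * |(p:ℝ)| ≤ |X| := by
          have h1 := abs_add_le X (-t)
          have e : X + -t = 2*π*(p:ℝ) := by rw [hX]; ring
          rw [e, abs_neg, abs_mul, abs_of_pos (by positivity : (0:ℝ) < 2*π)] at h1
          nlinarith [mul_nonneg (by linarith : (0:ℝ) ≤ π) (by linarith : (0:ℝ) ≤ |(p:ℝ)| - 3/2)]
        apply max_le (max_le ?_ ?_) ?_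
        · nlinarith [mul_nonneg (by linarith : (0:ℝ) ≤ π - 2) (abs_nonneg (p:ℝ)),
            mul_nonneg (by linarith : (0:ℝ) ≤ π) hK0.le]
        · nlinarith [mul_nonneg (by linarith : (0:ℝ) ≤ π) hK0.le, abs_nonneg X]
        · nlinarith [mul_nonneg (by linarith : (0:ℝ) ≤ π - 2) hK0.le, abs_nonneg X,
            mul_nonneg (by linarith : (0:ℝ) ≤ π) (abs_nonneg (p:ℝ))]
      · apply max_le (max_le ?_ ?_) ?_
        · nlinarith [mul_nonneg (by linarith : (0:ℝ) ≤ π - 2) hK0.le, abs_nonneg X]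
        · nlinarith [mul_nonneg (by linarith : (0:ℝ) ≤ π - 2) hK0.le, abs_nonneg X]
        · nlinarith [mul_nonneg (by linarith : (0:ℝ) ≤ π - 2) hK0.le, abs_nonneg X]
    -- difference facts
    have hXY : X - Y = 2*π*((p:ℝ) - (k:ℝ)) := by rw [hX, hY]; ring
    have habsXY : |X - Y| = 2*π*|(p:ℝ) - (k:ℝ)| := by
      rw [hXY, abs_mul, abs_of_pos Real.two_pi_pos]
    have hpkZ : (1:ℤ) ≤ |p - k| := Int.one_le_abs (sub_ne_zero.mpr hpk)
    have hpk1 : (1:ℝ) ≤ |(p:ℝ) - (k:ℝ)| := by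
      have h1 : ((1:ℤ):ℝ) ≤ ((|p - k| : ℤ):ℝ) := by exact_mod_cast hpkZ
      rwa [Int.cast_abs, Int.cast_sub, Int.cast_one] at h1
    have ha_eq : max |(p:ℝ) - (k:ℝ)| 1 = |(p:ℝ) - (k:ℝ)| := max_eq_left hpk1
    have hxmy_geA : max |(p:ℝ) - (k:ℝ)| 1 ≤ |X - Y| := by
      rw [ha_eq, habsXY]
      nlinarith [mul_nonneg (by linarith : (0:ℝ) ≤ 2*π - 1) (abs_nonneg ((p:ℝ) - (k:ℝ)))]
    have hxmy_ge1 : (1:ℝ) ≤ |X - Y| := le_trans (le_max_right _ _) hxmy_geA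
    have hLinv1 : (Real.log |(k:ℝ)|)⁻¹ ≤ 1 := inv_le_one_of_one_le₀ hL1
    have hLinv0 : (0:ℝ) < (Real.log |(k:ℝ)|)⁻¹ := by positivity
    have hXpY : X + Y = 2*π*((p:ℝ) + (k:ℝ)) + 2*t := by rw [hX, hY]; ring
    -- lower bound on |X+Y| off the resonant indices
    have hbb : p ≠ -k → p ≠ -(k+1) → max |(p:ℝ) + (k:ℝ)| 1 ≤ |X + Y| := by
      intro hq0 hq1
      have hqint : 1 ≤ p + k ∨ p + k ≤ -2 := by omega
      rcases hqint with hq | hq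
      · have hqR : (1:ℝ) ≤ (p:ℝ) + (k:ℝ) := by exact_mod_cast hq
        have hge : (p:ℝ) + (k:ℝ) ≤ X + Y := by
          rw [hXpY]
          nlinarith [mul_nonneg (by linarith : (0:ℝ) ≤ 2*π - 1)
            (by linarith : (0:ℝ) ≤ (p:ℝ) + (k:ℝ) - 1)]
        have habs : X + Y ≤ |X + Y| := le_abs_self _
        apply max_le
        · rw [abs_of_nonneg (by linarith : (0:ℝ) ≤ (p:ℝ) + (k:ℝ))]
          linarith
        · linarith
      · have hqR : (p:ℝ) + (k:ℝ) ≤ -2 := by exact_mod_cast hq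
        have hge : -((p:ℝ) + (k:ℝ)) ≤ -(X + Y) := by
          rw [hXpY]
          nlinarith [mul_nonneg (by linarith : (0:ℝ) ≤ 2*π - 1)
            (by linarith : (0:ℝ) ≤ -((p:ℝ) + (k:ℝ)) - 2)]
        have habs : -(X + Y) ≤ |X + Y| := neg_le_abs _
        apply max_le
        · rw [abs_of_nonpos (by linarith : (p:ℝ) + (k:ℝ) ≤ 0)]
          linarith
        · linarith
    -- construct D with its three properties, by parity
    obtain ⟨D, hD1, hDmaster, hDcase⟩ :
        ∃ D : ℝ, (Real.log |(k:ℝ)|)⁻¹ ≤ D ∧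
          D * ((|X| + |Y|) / 2) ^ (n-1) ≤ 2 * |X ^ n - Y ^ n| ∧
          ((p = -k ∨ p = -(k+1)) ∨
            min (max |(p:ℝ) - (k:ℝ)| 1) (max |(p:ℝ) + (k:ℝ)| 1) ≤ D) := by
      rcases Nat.even_or_odd n with hev | hod
      · -- n even
        rw [Aset, if_neg (by simpa using Nat.not_odd_iff_even.mpr hev)] at hp
        have hminD := aux_min_abs X Y
        have hmaster := aux_even (n-1) X Y
        rw [hn1, hev.pow_abs, hev.pow_abs] at hmaster
        have hblow : (Real.log |(k:ℝ)|)⁻¹ ≤ |X + Y| := by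
          by_cases hq0 : p = -k
          · have hXY2 : X + Y = 2*t := by
              rw [hXpY, hq0]
              push_cast
              ring
            have hh1 : ¬ |t| < (Real.log |(k:ℝ)|)⁻¹ := by
              intro h1
              rw [if_pos h1] at hp
              exact hp (by rw [hq0]; exact Set.mem_insert_of_mem _ rfl)
            push_neg at hh1
            have e2 : |X + Y| = 2 * |t| := by rw [hXY2, abs_mul]; norm_num
            rw [e2]
            linarith
          · by_cases hq1 : p = -(k+1)
            · have hXY2 : X + Y = 2*(t - π) := by
                rw [hXpY, hq1]
                push_cast
                ring
              have e2 : |X + Y| = 2 * |t - π| := by rw [hXY2, abs_mul]; norm_num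
              by_cases h1 : |t| < (Real.log |(k:ℝ)|)⁻¹
              · have htp : π - 1 ≤ |t - π| := by
                  have h2 : |π| ≤ |t| + |π - t| := by
                    calc |π| = |t + (π - t)| := by ring_nf
                      _ ≤ |t| + |π - t| := abs_add_le _ _
                  rw [abs_sub_comm π t, abs_of_pos (by linarith : (0:ℝ) < π)] at h2
                  linarith
                rw [e2]
                linarith
              · by_cases h2 : |t - π| < (Real.log |(k:ℝ)|)⁻¹
                · exfalso
                  rw [if_neg h1, if_pos h2] at hp
                  exact hp (by rw [hq1]; exact Set.mem_insert_of_mem _ rfl)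
                · push_neg at h2
                  rw [e2]
                  linarith
            · have := hbb hq0 hq1
              have hb1 : (1:ℝ) ≤ max |(p:ℝ) + (k:ℝ)| 1 := le_max_right _ _
              linarith
        refine ⟨|(|X| - |Y|)|, ?_, by linarith [abs_nonneg (X^n - Y^n)], ?_⟩
        · exact le_trans (le_min (by linarith) hblow) hminD
        · by_cases hsp : p = -k ∨ p = -(k+1)
          · exact Or.inl hsp
          · push_neg at hsp
            right
            have h1 : min (max |(p:ℝ) - (k:ℝ)| 1) (max |(p:ℝ) + (k:ℝ)| 1) ≤ |X - Y| :=
              le_trans (min_le_left _ _) hxmy_geA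
            have h2 : min (max |(p:ℝ) - (k:ℝ)| 1) (max |(p:ℝ) + (k:ℝ)| 1) ≤ |X + Y| :=
              le_trans (min_le_right _ _) (hbb hsp.1 hsp.2)
            exact le_trans (le_min h1 h2) hminD
      · -- n odd
        have hmaster := aux_odd (n-1) (by rw [hn1]; exact hod) X Y
        rw [hn1] at hmaster
        refine ⟨|X - Y|, by linarith, hmaster, Or.inr (le_trans (min_le_left _ _) hxmy_geA)⟩
    -- common part
    have hD0 : (0:ℝ) < D := lt_of_lt_of_le hLinv0 hD1
    have hpow1 : |(k:ℝ)| ^ (n-1) ≤ ((|X| + |Y|) / 2) ^ (n-1) :=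
      pow_le_pow_left₀ hK0.le (le_trans (le_max_right _ _) havg) _
    have hΔ : |(k:ℝ)| ^ (n-1) * (2 * Real.log |(k:ℝ)|)⁻¹ ≤ |X ^ n - Y ^ n| := by
      have h1 : (Real.log |(k:ℝ)|)⁻¹ * (|(k:ℝ)| ^ (n-1)) ≤ D * ((|X| + |Y|) / 2) ^ (n-1) :=
        mul_le_mul hD1 hpow1 (by positivity) hD0.le
      have e : |(k:ℝ)| ^ (n-1) * (2 * Real.log |(k:ℝ)|)⁻¹
          = ((Real.log |(k:ℝ)|)⁻¹ * |(k:ℝ)| ^ (n-1)) / 2 := by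
        rw [mul_inv]
        ring
      rw [e]
      linarith
    have htri : |X ^ n - Y ^ n|
        ≤ norm (lam - ((X:ℝ):ℂ) ^ n) + norm (lam - ((Y:ℝ):ℂ) ^ n) := by
      have h1 : ((X ^ n - Y ^ n : ℝ) : ℂ) = (lam - ((Y:ℝ):ℂ) ^ n) - (lam - ((X:ℝ):ℂ) ^ n) := by
        push_cast
        ring
      calc |X ^ n - Y ^ n| = norm ((X ^ n - Y ^ n : ℝ) : ℂ) := ((Complex.norm_real _).trans (Real.norm_eq_abs _)).symm
        _ = norm ((lam - ((Y:ℝ):ℂ) ^ n) - (lam - ((X:ℝ):ℂ) ^ n)) := by rw [h1]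
        _ ≤ norm (lam - ((Y:ℝ):ℂ) ^ n) + norm (lam - ((X:ℝ):ℂ) ^ n) := by
            rw [sub_eq_add_neg]
            refine le_trans (norm_add_le _ _) ?_
            rw [norm_neg]
        _ = norm (lam - ((X:ℝ):ℂ) ^ n) + norm (lam - ((Y:ℝ):ℂ) ^ n) := by ring
    have hhalfΔ : c₁ * |(k:ℝ)| ^ ((n:ℝ) - 1 - 1/(2*(m:ℝ))) ≤ |X ^ n - Y ^ n| / 2 := by
      have e : |(k:ℝ)| ^ (n-1) / (4 * Real.log |(k:ℝ)|)
          = (|(k:ℝ)| ^ (n-1) * (2 * Real.log |(k:ℝ)|)⁻¹) / 2 := by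
        rw [mul_inv]
        field_simp
        ring
      rw [e] at hc₁K
      linarith
    have hCAhalf : |X ^ n - Y ^ n| / 2 ≤ norm (lam - ((X:ℝ):ℂ) ^ n) := by
      linarith
    have hCA4 : D * (max (max |(p:ℝ)| 1) |(k:ℝ)|) ^ (n-1)
        ≤ 4 * norm (lam - ((X:ℝ):ℂ) ^ n) := by
      have havgpow : (max (max |(p:ℝ)| 1) |(k:ℝ)|) ^ (n-1) ≤ ((|X| + |Y|) / 2) ^ (n-1) :=
        pow_le_pow_left₀ (by positivity) havg _
      have h1 := mul_le_mul_of_nonneg_left havgpow hD0.le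
      linarith
    have hM1 : (1:ℝ) ≤ max |(p:ℝ)| 1 := le_max_right _ _
    have hW0 : (0:ℝ) < max |(p:ℝ)| |(k:ℝ)| := lt_of_lt_of_le hK0 (le_max_right _ _)
    have hnum : (max |(p:ℝ)| 1) ^ (n-2) * (max |(p:ℝ)| |(k:ℝ)|)
        ≤ (max (max |(p:ℝ)| 1) |(k:ℝ)|) ^ (n-1) := by
      have hsplitpow : (max (max |(p:ℝ)| 1) |(k:ℝ)|) ^ (n-1)
          = (max (max |(p:ℝ)| 1) |(k:ℝ)|) ^ (n-2) * (max (max |(p:ℝ)| 1) |(k:ℝ)|) := by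
        conv_lhs => rw [← hn2]
        rw [pow_succ]
      rw [hsplitpow]
      apply mul_le_mul (pow_le_pow_left₀ (by positivity) (le_max_left _ _) _)
        (max_le_max (le_max_left _ _) le_rfl) (by positivity) (by positivity)
    have hlow : D * ((max |(p:ℝ)| 1) ^ (n-2) * max |(p:ℝ)| |(k:ℝ)|)
        ≤ 4 * norm (lam - ((X:ℝ):ℂ) ^ n) :=
      le_trans (mul_le_mul_of_nonneg_left hnum hD0.le) hCA4
    have hMpow0 : (0:ℝ) < (max |(p:ℝ)| 1) ^ (n-2) := pow_pos (by linarith) _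
    have hCA0 : (0:ℝ) < norm (lam - ((X:ℝ):ℂ) ^ n) := by
      nlinarith [mul_pos hD0 (mul_pos hMpow0 hW0)]
    have hterm4 : |(p:ℝ)| ^ (n-2) / norm (lam - ((X:ℝ):ℂ) ^ n)
        ≤ 4 * (D * max |(p:ℝ)| |(k:ℝ)|)⁻¹ := by
      have hden : (0:ℝ) < D * ((max |(p:ℝ)| 1) ^ (n-2) * max |(p:ℝ)| |(k:ℝ)|) / 4 := by
        have := mul_pos hD0 (mul_pos hMpow0 hW0)
        linarith
      have h1 : |(p:ℝ)| ^ (n-2) / norm (lam - ((X:ℝ):ℂ) ^ n)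
          ≤ (max |(p:ℝ)| 1) ^ (n-2)
            / (D * ((max |(p:ℝ)| 1) ^ (n-2) * max |(p:ℝ)| |(k:ℝ)|) / 4) :=
        div_le_div₀ (by positivity) (pow_le_pow_left₀ (abs_nonneg _) (le_max_left _ _) _)
          hden (by linarith)
      have h2 : (max |(p:ℝ)| 1) ^ (n-2)
            / (D * ((max |(p:ℝ)| 1) ^ (n-2) * max |(p:ℝ)| |(k:ℝ)|) / 4)
          = 4 * (D * max |(p:ℝ)| |(k:ℝ)|)⁻¹ := by
        rw [div_div_eq_mul_div, mul_inv]
        field_simp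
      rw [h2] at h1
      exact h1
    rcases hDcase with hsp | hgen
    · rw [if_pos hsp]
      have hDW : (Real.log |(k:ℝ)|)⁻¹ * |(k:ℝ)| ≤ D * max |(p:ℝ)| |(k:ℝ)| :=
        mul_le_mul hD1 (le_max_right _ _) hK0.le hD0.le
      have h11 : (D * max |(p:ℝ)| |(k:ℝ)|)⁻¹ ≤ ((Real.log |(k:ℝ)|)⁻¹ * |(k:ℝ)|)⁻¹ :=
        inv_anti₀ (by positivity) hDW
      have h12 : ((Real.log |(k:ℝ)|)⁻¹ * |(k:ℝ)|)⁻¹ = Real.log |(k:ℝ)| / |(k:ℝ)| := by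
        rw [mul_inv, inv_inv, div_eq_mul_inv]
      rw [h12] at h11
      have hpos1 : (0:ℝ) ≤ 4 * ((max |(p:ℝ) - (k:ℝ)| 1) * max |(p:ℝ)| |(k:ℝ)|)⁻¹ := by positivity
      have hpos2 : (0:ℝ) ≤ 4 * ((max |(p:ℝ) + (k:ℝ)| 1) * max |(p:ℝ)| |(k:ℝ)|)⁻¹ := by positivity
      have h14 : 4 * (D * max |(p:ℝ)| |(k:ℝ)|)⁻¹ ≤ 4 * (Real.log |(k:ℝ)| / |(k:ℝ)|) := by
        linarith
      have h15 : 4 * (Real.log |(k:ℝ)| / |(k:ℝ)|) = 4 * Real.log |(k:ℝ)| / |(k:ℝ)| := by ring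
      linarith
    · have hind : (0:ℝ) ≤ (if p = -k ∨ p = -(k+1)
          then 4 * Real.log |(k:ℝ)| / |(k:ℝ)| else 0) := by
        split_ifs
        · positivity
        · exact le_rfl
      have ha0 : (0:ℝ) < max |(p:ℝ) - (k:ℝ)| 1 := lt_of_lt_of_le one_pos (le_max_right _ _)
      have hb0 : (0:ℝ) < max |(p:ℝ) + (k:ℝ)| 1 := lt_of_lt_of_le one_pos (le_max_right _ _)
      rcases le_total (max |(p:ℝ) - (k:ℝ)| 1) (max |(p:ℝ) + (k:ℝ)| 1) with hab | hab
      · have hmin := min_eq_left hab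
        rw [hmin] at hgen
        have h13 : (D * max |(p:ℝ)| |(k:ℝ)|)⁻¹
            ≤ ((max |(p:ℝ) - (k:ℝ)| 1) * max |(p:ℝ)| |(k:ℝ)|)⁻¹ :=
          inv_anti₀ (mul_pos ha0 hW0) (mul_le_mul_of_nonneg_right hgen hW0.le)
        have hpos2 : (0:ℝ) ≤ 4 * ((max |(p:ℝ) + (k:ℝ)| 1) * max |(p:ℝ)| |(k:ℝ)|)⁻¹ := by
          positivity
        linarith
      · have hmin := min_eq_right hab
        rw [hmin] at hgen
        have h13 : (D * max |(p:ℝ)| |(k:ℝ)|)⁻¹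
            ≤ ((max |(p:ℝ) + (k:ℝ)| 1) * max |(p:ℝ)| |(k:ℝ)|)⁻¹ :=
          inv_anti₀ (mul_pos hb0 hW0) (mul_le_mul_of_nonneg_right hgen hW0.le)
        have hpos1 : (0:ℝ) ≤ 4 * ((max |(p:ℝ) - (k:ℝ)| 1) * max |(p:ℝ)| |(k:ℝ)|)⁻¹ := by
          positivity
        linarith
    -- assemble the sum bound
  have hcx1 := aux_crux' k k hk3 le_rfl
  have hcx2 := aux_crux' k (-k) hk3 (by rw [abs_neg])
  simp only [Int.cast_neg, sub_neg_eq_add] at hcx2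
  have hs1 := hcx1.1
  have hs2 := hcx2.1
  have hns : (-k : ℤ) ≠ -(k+1) := by omega
  have hs3 : Summable (fun p : ℤ =>
      if p = -k ∨ p = -(k+1) then 4 * Real.log |(k:ℝ)| / |(k:ℝ)| else 0) := by
    apply summable_of_ne_finset_zero (s := ({-k, -(k+1)} : Finset ℤ))
    intro b hb
    simp only [Finset.mem_insert, Finset.mem_singleton] at hb
    push_neg at hb
    exact if_neg (by tauto)
  have ht3 : ∑' p : ℤ, (if p = -k ∨ p = -(k+1)
      then 4 * Real.log |(k:ℝ)| / |(k:ℝ)| else 0) = 8 * Real.log |(k:ℝ)| / |(k:ℝ)| := by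
    have hvanish : ∀ b ∉ ({-k, -(k+1)} : Finset ℤ),
        (if b = -k ∨ b = -(k+1) then 4 * Real.log |(k:ℝ)| / |(k:ℝ)| else 0) = 0 := by
      intro b hb
      simp only [Finset.mem_insert, Finset.mem_singleton] at hb
      push_neg at hb
      exact if_neg (by tauto)
    rw [tsum_eq_sum hvanish, Finset.sum_pair hns, if_pos (Or.inl rfl), if_pos (Or.inr rfl)]
    ring
  have hgsum : Summable (fun p : ℤ =>
      4 * ((max |(p:ℝ) - (k:ℝ)| 1) * max |(p:ℝ)| |(k:ℝ)|)⁻¹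
      + 4 * ((max |(p:ℝ) + (k:ℝ)| 1) * max |(p:ℝ)| |(k:ℝ)|)⁻¹
      + (if p = -k ∨ p = -(k+1) then 4 * Real.log |(k:ℝ)| / |(k:ℝ)| else 0)) :=
    ((hs1.mul_left 4).add (hs2.mul_left 4)).add hs3
  have hg0 : ∀ p : ℤ, (0:ℝ) ≤
      4 * ((max |(p:ℝ) - (k:ℝ)| 1) * max |(p:ℝ)| |(k:ℝ)|)⁻¹
      + 4 * ((max |(p:ℝ) + (k:ℝ)| 1) * max |(p:ℝ)| |(k:ℝ)|)⁻¹
      + (if p = -k ∨ p = -(k+1) then 4 * Real.log |(k:ℝ)| / |(k:ℝ)| else 0) := by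
    intro p
    have h1 : (0:ℝ) ≤ (if p = -k ∨ p = -(k+1)
        then 4 * Real.log |(k:ℝ)| / |(k:ℝ)| else 0) := by
      split_ifs
      · positivity
      · exact le_rfl
    have h2 : (0:ℝ) ≤ 4 * ((max |(p:ℝ) - (k:ℝ)| 1) * max |(p:ℝ)| |(k:ℝ)|)⁻¹ := by positivity
    have h3 : (0:ℝ) ≤ 4 * ((max |(p:ℝ) + (k:ℝ)| 1) * max |(p:ℝ)| |(k:ℝ)|)⁻¹ := by positivity
    linarith
  have hsub : Summable (fun q : {p : ℤ // p ∉ Aset n k t} =>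
      4 * ((max |(q.1:ℝ) - (k:ℝ)| 1) * max |(q.1:ℝ)| |(k:ℝ)|)⁻¹
      + 4 * ((max |(q.1:ℝ) + (k:ℝ)| 1) * max |(q.1:ℝ)| |(k:ℝ)|)⁻¹
      + (if q.1 = -k ∨ q.1 = -(k+1) then 4 * Real.log |(k:ℝ)| / |(k:ℝ)| else 0)) :=
    hgsum.comp_injective Subtype.val_injective
  have hT0 : ∀ q : {p : ℤ // p ∉ Aset n k t},
      (0:ℝ) ≤ |(q.1:ℝ)|^(n-2) / norm (lam - ((2*π*(q.1:ℝ) + t : ℝ) : ℂ)^n) := by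
    intro q
    positivity
  have hTle : ∀ q : {p : ℤ // p ∉ Aset n k t},
      |(q.1:ℝ)|^(n-2) / norm (lam - ((2*π*(q.1:ℝ) + t : ℝ) : ℂ)^n)
      ≤ 4 * ((max |(q.1:ℝ) - (k:ℝ)| 1) * max |(q.1:ℝ)| |(k:ℝ)|)⁻¹
        + 4 * ((max |(q.1:ℝ) + (k:ℝ)| 1) * max |(q.1:ℝ)| |(k:ℝ)|)⁻¹
        + (if q.1 = -k ∨ q.1 = -(k+1) then 4 * Real.log |(k:ℝ)| / |(k:ℝ)| else 0) :=
    fun q => key q.1 q.2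
  have hTsummable : Summable (fun q : {p : ℤ // p ∉ Aset n k t} =>
      |(q.1:ℝ)|^(n-2) / norm (lam - ((2*π*(q.1:ℝ) + t : ℝ) : ℂ)^n)) :=
    Summable.of_nonneg_of_le hT0 hTle hsub
  refine ⟨hTsummable, ?_⟩
  have step1 : (∑' q : {p : ℤ // p ∉ Aset n k t},
      |(q.1:ℝ)|^(n-2) / norm (lam - ((2*π*(q.1:ℝ) + t : ℝ) : ℂ)^n))
      ≤ ∑' q : {p : ℤ // p ∉ Aset n k t},
        (4 * ((max |(q.1:ℝ) - (k:ℝ)| 1) * max |(q.1:ℝ)| |(k:ℝ)|)⁻¹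
        + 4 * ((max |(q.1:ℝ) + (k:ℝ)| 1) * max |(q.1:ℝ)| |(k:ℝ)|)⁻¹
        + (if q.1 = -k ∨ q.1 = -(k+1) then 4 * Real.log |(k:ℝ)| / |(k:ℝ)| else 0)) :=
    Summable.tsum_le_tsum hTle hTsummable hsub
  have step2 : (∑' q : {p : ℤ // p ∉ Aset n k t},
      (4 * ((max |(q.1:ℝ) - (k:ℝ)| 1) * max |(q.1:ℝ)| |(k:ℝ)|)⁻¹
      + 4 * ((max |(q.1:ℝ) + (k:ℝ)| 1) * max |(q.1:ℝ)| |(k:ℝ)|)⁻¹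
      + (if q.1 = -k ∨ q.1 = -(k+1) then 4 * Real.log |(k:ℝ)| / |(k:ℝ)| else 0)))
      ≤ ∑' p : ℤ,
        (4 * ((max |(p:ℝ) - (k:ℝ)| 1) * max |(p:ℝ)| |(k:ℝ)|)⁻¹
        + 4 * ((max |(p:ℝ) + (k:ℝ)| 1) * max |(p:ℝ)| |(k:ℝ)|)⁻¹
        + (if p = -k ∨ p = -(k+1) then 4 * Real.log |(k:ℝ)| / |(k:ℝ)| else 0)) :=
    Summable.tsum_le_tsum_of_inj (Subtype.val) Subtype.val_injective (fun c _ => hg0 c)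
      (fun q => le_rfl) hsub hgsum
  have step3 : (∑' p : ℤ,
      (4 * ((max |(p:ℝ) - (k:ℝ)| 1) * max |(p:ℝ)| |(k:ℝ)|)⁻¹
      + 4 * ((max |(p:ℝ) + (k:ℝ)| 1) * max |(p:ℝ)| |(k:ℝ)|)⁻¹
      + (if p = -k ∨ p = -(k+1) then 4 * Real.log |(k:ℝ)| / |(k:ℝ)| else 0)))
      = 4 * (∑' p : ℤ, ((max |(p:ℝ) - (k:ℝ)| 1) * max |(p:ℝ)| |(k:ℝ)|)⁻¹)
        + 4 * (∑' p : ℤ, ((max |(p:ℝ) + (k:ℝ)| 1) * max |(p:ℝ)| |(k:ℝ)|)⁻¹)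
        + 8 * Real.log |(k:ℝ)| / |(k:ℝ)| := by
    rw [Summable.tsum_add ((hs1.mul_left 4).add (hs2.mul_left 4)) hs3,
      Summable.tsum_add (hs1.mul_left 4) (hs2.mul_left 4), tsum_mul_left, tsum_mul_left, ht3]
  have hLK : (0:ℝ) ≤ Real.log |(k:ℝ)| / |(k:ℝ)| := by positivity
  have hfinal : 4 * (∑' p : ℤ, ((max |(p:ℝ) - (k:ℝ)| 1) * max |(p:ℝ)| |(k:ℝ)|)⁻¹)
        + 4 * (∑' p : ℤ, ((max |(p:ℝ) + (k:ℝ)| 1) * max |(p:ℝ)| |(k:ℝ)|)⁻¹)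
        + 8 * Real.log |(k:ℝ)| / |(k:ℝ)|
      ≤ 200 * Real.log |(k:ℝ)| / |(k:ℝ)| := by
    have m1 := hcx1.2
    have m2 := hcx2.2
    have e1 : 20 * Real.log |(k:ℝ)| / |(k:ℝ)| = 20 * (Real.log |(k:ℝ)| / |(k:ℝ)|) := by ring
    have e2 : 8 * Real.log |(k:ℝ)| / |(k:ℝ)| = 8 * (Real.log |(k:ℝ)| / |(k:ℝ)|) := by ring
    have e3 : 200 * Real.log |(k:ℝ)| / |(k:ℝ)| = 200 * (Real.log |(k:ℝ)| / |(k:ℝ)|) := by ring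
    rw [e1] at m1 m2
    rw [e2, e3]
    nlinarith [hLK, m1, m2]
  calc (∑' q : {p : ℤ // p ∉ Aset n k t},
      |(q.1:ℝ)|^(n-2) / norm (lam - ((2*π*(q.1:ℝ) + t : ℝ) : ℂ)^n))
      ≤ ∑' p : ℤ,
        (4 * ((max |(p:ℝ) - (k:ℝ)| 1) * max |(p:ℝ)| |(k:ℝ)|)⁻¹
        + 4 * ((max |(p:ℝ) + (k:ℝ)| 1) * max |(p:ℝ)| |(k:ℝ)|)⁻¹
        + (if p = -k ∨ p = -(k+1) then 4 * Real.log |(k:ℝ)| / |(k:ℝ)| else 0)) :=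
      le_trans step1 step2
    _ ≤ 200 * Real.log |(k:ℝ)| / |(k:ℝ)| := by rw [step3]; exact hfinal
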